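/- Let O be a hermitian circulant operator on ℂ²⊗ℂ² in real representation with diagonal entries w₁₁, w₁₂, w₂₁, w₂₂ and anti-diagonal u₁, u₂ ≥ 0, and suppose w₁₁ = w₂₁ and w₁₂ = w₂₂ (i.e., A₁(y) = A₂(y) for all y). Then the maximum of the quadratic form over real product unit vectors is attained at x = (1/√2, 1/√2), and equals max over unit y ∈ ℝ²_{≥0} of Σ_k w₁k y_k² + (u₁+u₂) y₁ y₂ = (w₁₁+w₁₂)/2 + √(((w₁₁−w₁₂)/2)² + ((u₁+u₂)/2)²). -/

import Mathlib

open Matrix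

/-- Kronecker product vector of `x, y ∈ ℝ²` in the ordered basis
`(e₁⊗f₁, e₁⊗f₂, e₂⊗f₁, e₂⊗f₂)`. -/
def kvecR (x y : Fin 2 → ℝ) : Fin 4 → ℝ := ![x 0 * y 0, x 0 * y 1, x 1 * y 0, x 1 * y 1]

lemma le_sqrt_add (p q : ℝ) : p ≤ Real.sqrt (p^2 + q^2) := by
  calc p ≤ |p| := le_abs_self _
    _ = Real.sqrt (p^2) := (Real.sqrt_sq_eq_abs _).symm
    _ ≤ Real.sqrt (p^2 + q^2) := Real.sqrt_le_sqrt (by nlinarith [sq_nonneg q])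

lemma key_ub (a b c t s : ℝ) (hc : 0 ≤ c) (ht : 0 ≤ t) (hs : 0 ≤ s) (hts : t^2 + s^2 = 1) :
    a*t^2 + b*s^2 + 2*c*t*s ≤ (a+b)/2 + Real.sqrt (((a-b)/2)^2 + c^2) := by
  set D := Real.sqrt (((a-b)/2)^2 + c^2) with hD
  have hD0 : 0 ≤ D := Real.sqrt_nonneg _
  have hD2 : D^2 = ((a-b)/2)^2 + c^2 := Real.sq_sqrt (by positivity)
  have hX0 : 0 ≤ (b-a)/2 + D := by
    have := le_sqrt_add ((a-b)/2) c; rw [← hD] at this; linarith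
  have hY0 : 0 ≤ (a-b)/2 + D := by
    have := le_sqrt_add ((b-a)/2) c
    rw [show ((b-a)/2)^2 + c^2 = ((a-b)/2)^2 + c^2 by ring, ← hD] at this; linarith
  have hXY : ((b-a)/2 + D) * ((a-b)/2 + D) = c^2 := by linear_combination hD2
  have amgm : 2*c*t*s ≤ ((b-a)/2 + D)*t^2 + ((a-b)/2 + D)*s^2 := by
    rcases eq_or_lt_of_le hX0 with h0 | h0
    · have hc0 : c = 0 := by nlinarith
      subst hc0
      nlinarith [mul_nonneg hY0 (sq_nonneg s), mul_nonneg hX0 (sq_nonneg t)]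
    · nlinarith [sq_nonneg (((b-a)/2 + D)*t - c*s), mul_nonneg hY0 (sq_nonneg s),
        mul_pos h0 h0]
  have h5 : ((a+b)/2+D)*t^2 + ((a+b)/2+D)*s^2 = (a+b)/2+D := by
    linear_combination ((a+b)/2+D) * hts
  nlinarith [amgm, h5]

lemma key_att (a b c : ℝ) (hc : 0 ≤ c) :
    ∃ t s : ℝ, 0 ≤ t ∧ 0 ≤ s ∧ t^2 + s^2 = 1 ∧
      a*t^2 + b*s^2 + 2*c*t*s = (a+b)/2 + Real.sqrt (((a-b)/2)^2 + c^2) := by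
  rcases eq_or_lt_of_le hc with h0 | h0
  · subst h0
    rw [show ((a-b)/2)^2 + (0:ℝ)^2 = ((a-b)/2)^2 by ring, Real.sqrt_sq_eq_abs]
    rcases le_total b a with hab | hab
    · exact ⟨1, 0, by norm_num, le_refl 0, by norm_num,
        by rw [abs_of_nonneg (by linarith : (0:ℝ) ≤ (a-b)/2)]; ring⟩
    · exact ⟨0, 1, le_refl 0, by norm_num, by norm_num,
        by rw [abs_of_nonpos (by linarith : (a-b)/2 ≤ (0:ℝ))]; ring⟩
  · set D := Real.sqrt (((a-b)/2)^2 + c^2) with hD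
    have hD0 : 0 ≤ D := Real.sqrt_nonneg _
    have hD2 : D^2 = ((a-b)/2)^2 + c^2 := Real.sq_sqrt (by positivity)
    have hX0 : 0 ≤ (b-a)/2 + D := by
      have := le_sqrt_add ((a-b)/2) c; rw [← hD] at this; linarith
    set X := (b-a)/2 + D with hX
    set N := Real.sqrt (c^2 + X^2) with hN
    have hsum_pos : (0:ℝ) < c^2 + X^2 := by positivity
    have hN2 : N^2 = c^2 + X^2 := Real.sq_sqrt (by positivity)
    have hNpos : 0 < N := Real.sqrt_pos.mpr hsum_pos
    have hkey : a*c^2 + b*X^2 + 2*c^2*X = ((a+b)/2 + D)*(c^2 + X^2) := by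
      linear_combination (-X) * hD2
    refine ⟨c/N, X/N, by positivity, by positivity, ?_, ?_⟩
    · field_simp
      linarith [hN2]
    · calc a*(c/N)^2 + b*(X/N)^2 + 2*c*(c/N)*(X/N)
          = (a*c^2 + b*X^2 + 2*c^2*X)/N^2 := by ring
        _ = (((a+b)/2+D)*(c^2+X^2))/(c^2+X^2) := by rw [hkey, hN2]
        _ = (a+b)/2+D := by field_simp

lemma qf (w11 w12 w21 w22 u1 u2 : ℝ) (x y : Fin 2 → ℝ) :
    kvecR x y ⬝ᵥ (!![w11, 0, 0, u1; 0, w12, u2, 0; 0, u2, w21, 0; u1, 0, 0, w22]).mulVec (kvecR x y)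
    = w11*(x 0*y 0)^2 + w12*(x 0*y 1)^2 + w21*(x 1*y 0)^2 + w22*(x 1*y 1)^2
      + 2*u1*(x 0*y 0)*(x 1*y 1) + 2*u2*(x 0*y 1)*(x 1*y 0) := by
  simp [kvecR, mulVec, dotProduct, Fin.sum_univ_four]
  ring

set_option maxHeartbeats 1000000 in
/-- For an X-shaped circulant matrix in real representation with `w₁₁ = w₂₁`, `w₁₂ = w₂₂`,
the maximum of the quadratic form over real product unit vectors is attained at
`x = (1/√2, 1/√2)` and equals
`max_{y ≥ 0, ‖y‖=1} (w₁₁y₁² + w₁₂y₂² + (u₁+u₂)y₁y₂)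
  = (w₁₁+w₁₂)/2 + √(((w₁₁−w₁₂)/2)² + ((u₁+u₂)/2)²)`. -/
theorem balanced_X_max (w11 w12 w21 w22 u1 u2 : ℝ) (hu1 : 0 ≤ u1) (hu2 : 0 ≤ u2)
    (h1 : w11 = w21) (h2 : w12 = w22) :
    let M : Matrix (Fin 4) (Fin 4) ℝ :=
      !![w11, 0, 0, u1; 0, w12, u2, 0; 0, u2, w21, 0; u1, 0, 0, w22]
    let γ : ℝ := (w11 + w12) / 2 +
      Real.sqrt (((w11 - w12) / 2) ^ 2 + ((u1 + u2) / 2) ^ 2)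
    IsGreatest {r : ℝ | ∃ x y : Fin 2 → ℝ,
        x 0 ^ 2 + x 1 ^ 2 = 1 ∧ y 0 ^ 2 + y 1 ^ 2 = 1 ∧
        kvecR x y ⬝ᵥ M.mulVec (kvecR x y) = r} γ ∧
    (∃ y : Fin 2 → ℝ, 0 ≤ y 0 ∧ 0 ≤ y 1 ∧ y 0 ^ 2 + y 1 ^ 2 = 1 ∧
      kvecR ![1 / Real.sqrt 2, 1 / Real.sqrt 2] y ⬝ᵥ
        M.mulVec (kvecR ![1 / Real.sqrt 2, 1 / Real.sqrt 2] y) = γ) ∧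
    IsGreatest {r : ℝ | ∃ y : Fin 2 → ℝ, 0 ≤ y 0 ∧ 0 ≤ y 1 ∧
        y 0 ^ 2 + y 1 ^ 2 = 1 ∧
        w11 * y 0 ^ 2 + w12 * y 1 ^ 2 + (u1 + u2) * y 0 * y 1 = r} γ := by
  subst h1 h2
  intro M γ
  have hMdef : M = !![w11, 0, 0, u1; 0, w12, u2, 0; 0, u2, w11, 0; u1, 0, 0, w12] := rfl
  have hγdef : γ = (w11 + w12) / 2 +
      Real.sqrt (((w11 - w12) / 2) ^ 2 + ((u1 + u2) / 2) ^ 2) := rfl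
  have hc : (0:ℝ) ≤ (u1 + u2)/2 := by linarith
  obtain ⟨t, s, ht, hs, hts, hval⟩ := key_att w11 w12 ((u1 + u2)/2) hc
  have hvalγ : w11*t^2 + w12*s^2 + (u1+u2)*t*s = γ := by
    rw [hγdef]; linear_combination hval
  -- the distinguished x
  have hr2 : (1 / Real.sqrt 2 : ℝ)^2 = 1/2 := by
    rw [div_pow, one_pow, Real.sq_sqrt (by norm_num : (0:ℝ) ≤ 2)]
  have hxnorm : (1 / Real.sqrt 2 : ℝ)^2 + (1 / Real.sqrt 2 : ℝ)^2 = 1 := by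
    rw [hr2]; norm_num
  -- value at the distinguished point
  have hstar : kvecR ![1 / Real.sqrt 2, 1 / Real.sqrt 2] ![t, s] ⬝ᵥ
      M.mulVec (kvecR ![1 / Real.sqrt 2, 1 / Real.sqrt 2] ![t, s]) = γ := by
    rw [hMdef, qf]
    simp only [Matrix.cons_val_zero, Matrix.cons_val_one, Matrix.head_cons]
    rw [← hvalγ]
    linear_combination (2*w11*t^2 + 2*w12*s^2 + 2*(u1+u2)*t*s) * hr2
  -- upper bound for the product-vector form
  have hub : ∀ x y : Fin 2 → ℝ, x 0 ^ 2 + x 1 ^ 2 = 1 → y 0 ^ 2 + y 1 ^ 2 = 1 →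
      kvecR x y ⬝ᵥ M.mulVec (kvecR x y) ≤ γ := by
    intro x y hx hy
    rw [hMdef, qf]
    have habs : y 0 * y 1 ≤ |y 0| * |y 1| := by rw [← abs_mul]; exact le_abs_self _
    have habs' : -(|y 0| * |y 1|) ≤ y 0 * y 1 := by rw [← abs_mul]; exact neg_abs_le _
    have h2x : 2*(x 0)*(x 1) ≤ 1 := by nlinarith [sq_nonneg (x 0 - x 1)]
    have h2x' : -1 ≤ 2*(x 0)*(x 1) := by nlinarith [sq_nonneg (x 0 + x 1)]
    have hubk := key_ub w11 w12 ((u1+u2)/2) |y 0| |y 1| hc (abs_nonneg _) (abs_nonneg _)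
      (by rw [sq_abs, sq_abs]; exact hy)
    rw [sq_abs, sq_abs] at hubk
    rw [hγdef]
    have e1 : w11*(x 0*y 0)^2 + w11*(x 1*y 0)^2 = w11*(y 0)^2 := by
      linear_combination (w11*(y 0)^2) * hx
    have e2 : w12*(x 0*y 1)^2 + w12*(x 1*y 1)^2 = w12*(y 1)^2 := by
      linear_combination (w12*(y 1)^2) * hx
    have hcross : 2*(x 0)*(x 1)*(y 0*y 1) ≤ |y 0| * |y 1| := by
      linarith [mul_nonneg (by linarith : (0:ℝ) ≤ 1 - 2*(x 0)*(x 1))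
          (by linarith : (0:ℝ) ≤ |y 0| * |y 1| + y 0*y 1),
        mul_nonneg (by linarith : (0:ℝ) ≤ 1 + 2*(x 0)*(x 1))
          (by linarith : (0:ℝ) ≤ |y 0| * |y 1| - y 0*y 1)]
    have hcross2 : (u1+u2)*(2*(x 0)*(x 1)*(y 0*y 1)) ≤ (u1+u2)*(|y 0| * |y 1|) :=
      mul_le_mul_of_nonneg_left hcross (by linarith)
    linarith [e1, e2, hubk, hcross2]
  refine ⟨⟨⟨![1 / Real.sqrt 2, 1 / Real.sqrt 2], ![t, s], ?_, ?_, hstar⟩, ?_⟩,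
    ⟨![t, s], ?_, ?_, ?_, hstar⟩, ⟨![t, s], ?_, ?_, ?_, ?_⟩, ?_⟩
  · simpa using hxnorm
  · simpa using hts
  · rintro r ⟨x, y, hx, hy, hr⟩
    rw [← hr]; exact hub x y hx hy
  · simpa using ht
  · simpa using hs
  · simpa using hts
  · simpa using ht
  · simpa using hs
  · simpa using hts
  · simpa using hvalγ
  · rintro r ⟨y, hy0, hy1, hyn, hr⟩
    have := key_ub w11 w12 ((u1+u2)/2) (y 0) (y 1) hc hy0 hy1 hyn
    rw [← hr, hγdef]; linarith
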